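/- Let (E, J, M) be a double factorization system on a bicomplete category C, and T = (T, η, μ) a monad on C whose underlying functor preserves all small colimits and satisfies T(E) ⊆ E and T(J) ⊆ J. Let S denote either the class J or the class J·E, and let S^T denote the corresponding class J^T or J^T·E^T in C^T (preimages under the forgetful functor V^T). Then V^T preserves and reflects S-local objects: a T-algebra (A, h) is S^T-local in C^T if and only if its underlying object A is S-local in C. -/

import Mathlib

open CategoryTheory CategoryTheory.Limits

universe v u v₂ u₂

namespace DFS

variable {C : Type u} [Category.{v} C]

/-- `f` is (left) orthogonal to `g`: every commutative square from `f` to `g`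
admits a unique diagonal filler. -/
def Orth {A B X Y : C} (f : A ⟶ B) (g : X ⟶ Y) : Prop :=
  ∀ (u : A ⟶ X) (v : B ⟶ Y), u ≫ g = f ≫ v → ∃! h : B ⟶ X, f ≫ h = u ∧ h ≫ g = v

/-- Mutual orthogonality of two classes of morphisms. -/
def ClassOrth (L R : MorphismProperty C) : Prop :=
  ∀ ⦃A B X Y : C⦄ (f : A ⟶ B) (g : X ⟶ Y), L f → R g → Orth f g

/-- The class `R·L` of composites `e ≫ m` with `e ∈ L` and `m ∈ R`. -/
def Comp (R L : MorphismProperty C) : MorphismProperty C :=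
  fun X Y f => ∃ (Z : C) (e : X ⟶ Z) (m : Z ⟶ Y), L e ∧ R m ∧ e ≫ m = f

/-- An object `X` is `L`-local if precomposition with every member of `L` is a
bijection of hom-sets into `X`. -/
def IsLocal (L : MorphismProperty C) (X : C) : Prop :=
  ∀ ⦃A B : C⦄ (m : A ⟶ B), L m → Function.Bijective (fun g : B ⟶ X => m ≫ g)

/-- An object `X` is `L`-separating if precomposition with every member of `L` is an
injection of hom-sets into `X`. -/
def IsSeparating (L : MorphismProperty C) (X : C) : Prop :=
  ∀ ⦃A B : C⦄ (m : A ⟶ B), L m → Function.Injective (fun g : B ⟶ X => m ≫ g)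

/-- A double (orthogonal) factorization system. -/
structure IsDFS (E J M : MorphismProperty C) : Prop where
  postcomp_iso_E : ∀ ⦃A B B' : C⦄ (e : A ⟶ B) (i : B ⟶ B'), IsIso i → E e → E (e ≫ i)
  comp_iso_J : ∀ ⦃A' A B B' : C⦄ (i : A' ⟶ A) (j : A ⟶ B) (i' : B ⟶ B'),
      IsIso i → IsIso i' → J j → J (i ≫ j ≫ i')
  precomp_iso_M : ∀ ⦃A' A B : C⦄ (i : A' ⟶ A) (m : A ⟶ B), IsIso i → M m → M (i ≫ m)
  fac : ∀ ⦃X Y : C⦄ (f : X ⟶ Y), ∃ (A B : C) (e : X ⟶ A) (j : A ⟶ B) (m : B ⟶ Y),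
      E e ∧ J j ∧ M m ∧ e ≫ j ≫ m = f
  lift : ∀ ⦃A B B'' D D' F' : C⦄ (e : A ⟶ B) (j : B ⟶ B'') (j' : D ⟶ D') (m : D' ⟶ F')
      (u : A ⟶ D) (v : B'' ⟶ F'), E e → J j → J j' → M m →
      e ≫ j ≫ v = u ≫ j' ≫ m →
      ∃! st : (B ⟶ D) × (B'' ⟶ D'),
        e ≫ st.1 = u ∧ st.1 ≫ j' = j ≫ st.2 ∧ st.2 ≫ m = v

/-- An (orthogonal) factorization system. -/
structure IsFS (L R : MorphismProperty C) : Prop where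
  fac : ∀ ⦃X Y : C⦄ (f : X ⟶ Y), ∃ (Z : C) (e : X ⟶ Z) (m : Z ⟶ Y), L e ∧ R m ∧ e ≫ m = f
  left_iff : ∀ ⦃A B : C⦄ (f : A ⟶ B), L f ↔ ∀ ⦃X Y : C⦄ (g : X ⟶ Y), R g → Orth f g
  right_iff : ∀ ⦃X Y : C⦄ (g : X ⟶ Y), R g ↔ ∀ ⦃A B : C⦄ (f : A ⟶ B), L f → Orth f g

/-- Stability of a class of morphisms under pullback. -/
def StableUnderPB (P : MorphismProperty C) : Prop :=
  ∀ ⦃A B A' B' : C⦄ (f : A ⟶ B) (g : B' ⟶ B) (f' : A' ⟶ B') (h : A' ⟶ A),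
    IsPullback h f' f g → P f → P f'

/-- A left Quillen functor between categories equipped with dfs's: it maps
trivial cofibrations to trivial cofibrations and cofibrations to cofibrations. -/
def LeftQuillen {D : Type u₂} [Category.{v₂} D]
    (EC JC : MorphismProperty C) (ED JD : MorphismProperty D) (F : C ⥤ D) : Prop :=
  (∀ ⦃A B : C⦄ (f : A ⟶ B), EC f → ED (F.map f)) ∧
  (∀ ⦃A B : C⦄ (f : A ⟶ B), Comp JC EC f → Comp JD ED (F.map f))

end DFS

namespace DFS

/-- The preimage of a class of morphisms under the forgetful functor from
Eilenberg–Moore algebras. -/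
def algPre {C : Type u} [Category.{v} C] (T : Monad C) (P : MorphismProperty C) :
    MorphismProperty T.Algebra :=
  fun _ _ f => P f.f

end DFS

namespace DFS

variable {C : Type u} [Category.{v} C]

/-- If the underlying object of an algebra is `S`-local and `S` is stable under `T`,
then the algebra is local with respect to any algebra-level class lying over `S`. -/
lemma isLocal_algebra_of_isLocal (T : Monad C) (S : MorphismProperty C)
    (S' : MorphismProperty T.Algebra) (hS' : ∀ ⦃Y Z : T.Algebra⦄ (f : Y ⟶ Z), S' f → S f.f)
    (hT : ∀ ⦃A B : C⦄ (f : A ⟶ B), S f → S (T.toFunctor.map f))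
    (X : T.Algebra) (hX : IsLocal S X.A) : IsLocal S' X := by
  intro Y Z f hf
  constructor
  · intro g₁ g₂ hg
    have : f.f ≫ g₁.f = f.f ≫ g₂.f := congrArg Monad.Algebra.Hom.f hg
    exact Monad.Algebra.Hom.ext ((hX f.f (hS' f hf)).1 this)
  · intro u
    obtain ⟨g, hg⟩ := (hX f.f (hS' f hf)).2 u.f
    simp only [] at hg
    have hgalg : T.toFunctor.map g ≫ X.a = Z.a ≫ g := by
      apply (hX (T.toFunctor.map f.f) (hT f.f (hS' f hf))).1
      simp only []
      calc T.toFunctor.map f.f ≫ T.toFunctor.map g ≫ X.a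
          = T.toFunctor.map (f.f ≫ g) ≫ X.a := by rw [T.toFunctor.map_comp, Category.assoc]
        _ = T.toFunctor.map u.f ≫ X.a := by rw [hg]
        _ = Y.a ≫ u.f := u.h
        _ = Y.a ≫ f.f ≫ g := by rw [← hg]
        _ = (Y.a ≫ f.f) ≫ g := by rw [Category.assoc]
        _ = (T.toFunctor.map f.f ≫ Z.a) ≫ g := by rw [f.h]
        _ = T.toFunctor.map f.f ≫ Z.a ≫ g := by rw [Category.assoc]
    refine ⟨⟨g, hgalg⟩, ?_⟩
    exact Monad.Algebra.Hom.ext hg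

/-- Precomposition with `m` into the underlying object is a bijection whenever
precomposition with the free algebra map on `m` into the algebra is. -/
lemma bijective_of_bijective_free (T : Monad C) (X : T.Algebra) {A B : C} (m : A ⟶ B)
    (hb : Function.Bijective (fun k : T.free.obj B ⟶ X => T.free.map m ≫ k)) :
    Function.Bijective (fun g : B ⟶ X.A => m ≫ g) := by
  have key : (fun g : B ⟶ X.A => m ≫ g) =
      (T.adj.homEquiv A X) ∘ (fun k : T.free.obj B ⟶ X => T.free.map m ≫ k) ∘
        (T.adj.homEquiv B X).symm := by
    funext g
    show m ≫ g = (T.adj.homEquiv A X) (T.free.map m ≫ (T.adj.homEquiv B X).symm (g : B ⟶ T.forget.obj X))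
    rw [Adjunction.homEquiv_naturality_left]
    exact congrArg (m ≫ ·) ((T.adj.homEquiv B X).apply_symm_apply g).symm
  rw [key]
  exact ((T.adj.homEquiv A X).bijective.comp hb).comp (T.adj.homEquiv B X).symm.bijective

end DFS

/-- Let `(E, J, M)` be a dfs on a bicomplete category `C` and
`T` a monad whose underlying functor preserves all small colimits, `T(E) ⊆ E` and
`T(J) ⊆ J`.  Then the forgetful functor preserves and reflects `S`-local objects,
for `S = J` and for `S = J·E`: a `T`-algebra is `S^T`-local iff its underlying
object is `S`-local. -/
theorem statement5 {C : Type u} [Category.{v} C] [HasLimits C] [HasColimits C]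
    (E J M : MorphismProperty C) (h : DFS.IsDFS E J M) (T : Monad C)
    [PreservesColimits T.toFunctor]
    (hE : ∀ ⦃A B : C⦄ (f : A ⟶ B), E f → E (T.toFunctor.map f))
    (hJ : ∀ ⦃A B : C⦄ (f : A ⟶ B), J f → J (T.toFunctor.map f)) :
    ∀ X : T.Algebra,
      (DFS.IsLocal (DFS.algPre T J) X ↔ DFS.IsLocal J X.A) ∧
      (DFS.IsLocal (DFS.Comp (DFS.algPre T J) (DFS.algPre T E)) X ↔
        DFS.IsLocal (DFS.Comp J E) X.A) := by
  intro X
  constructor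
  · constructor
    · intro hX A B m hm
      refine DFS.bijective_of_bijective_free T X m (hX (T.free.map m) ?_)
      show J (T.free.map m).f
      exact hJ m hm
    · intro hX
      exact DFS.isLocal_algebra_of_isLocal T J (DFS.algPre T J)
        (fun _ _ f hf => hf) hJ X hX
  · constructor
    · intro hX A B m hm
      refine DFS.bijective_of_bijective_free T X m (hX (T.free.map m) ?_)
      obtain ⟨Z, e, j, he, hj, hc⟩ := hm
      refine ⟨T.free.obj Z, T.free.map e, T.free.map j, ?_, ?_, ?_⟩
      · show E (T.free.map e).f; exact hE e he
      · show J (T.free.map j).f; exact hJ j hj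
      · rw [← T.free.map_comp, hc]
    · intro hX
      refine DFS.isLocal_algebra_of_isLocal T (DFS.Comp J E)
        (DFS.Comp (DFS.algPre T J) (DFS.algPre T E)) ?_ ?_ X hX
      · rintro Y Z f ⟨W, e, j, he, hj, hc⟩
        exact ⟨W.A, e.f, j.f, he, hj, congrArg Monad.Algebra.Hom.f hc⟩
      · rintro A B f ⟨Z, e, j, he, hj, hc⟩
        exact ⟨T.toFunctor.obj Z, T.toFunctor.map e, T.toFunctor.map j,
          hE e he, hJ j hj, by rw [← T.toFunctor.map_comp, hc]⟩
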